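/- Let F_γ : ℝⁿ → ℝ be convex and differentiable with block coordinate-wise Lipschitz gradient with constants Lᵢ > 0, let X* ⊆ ℝⁿ be nonempty closed convex and F* ∈ ℝ with F_γ(x*) ≤ F* for every x* ∈ X*, and suppose F_γ(x) − F* ≥ (κ̄/2)‖x − x̄‖₁² for all x ∈ ℝⁿ with some κ̄ > 0, where x̄ is the ‖·‖₁-projection of x onto X*. Fix x₀ ∈ ℝⁿ and, for each index word ω = (ω₀,…,ω_{k−1}) ∈ {1,…,N}^k, define iterates by x₀(ω) = x₀ and x_{j+1}(ω) = x_j(ω) − (1/L_{ω_j}) U_{ω_j} U_{ω_j}ᵀ∇F_γ(x_j(ω)). Then for every k ≥ 0: N^{−k} ∑_{ω∈{1,…,N}^k} [ (1/2)‖x_k(ω) − x_k(ω)‾‖₁² + F_γ(x_k(ω)) − F* ] ≤ (1 − κ̄/(N(1+κ̄)))^k · [ (1/2)‖x₀ − x̄₀‖₁² + F_γ(x₀) − F* ], where y‾ denotes the ‖·‖₁-projection of y onto X*. -/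

import Mathlib

noncomputable section
open scoped RealInnerProductSpace

/-- `blockProj b i x` models `Uᵢ Uᵢᵀ x`: the vector of `ℝⁿ` keeping the coordinates of block
`i` (as given by the block assignment `b : Fin n → Fin N`) and zeroing the others. -/
def blockProj {n N : ℕ} (b : Fin n → Fin N) (i : Fin N) (x : EuclideanSpace ℝ (Fin n)) :
    EuclideanSpace ℝ (Fin n) :=
  (EuclideanSpace.equiv (Fin n) ℝ).symm (fun j => if b j = i then x j else 0)

/-- The squared weighted norm `‖x‖₁² = ∑ᵢ Lᵢ ‖Uᵢᵀ x‖²`. -/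
def wnormSq {n N : ℕ} (b : Fin n → Fin N) (L : Fin N → ℝ)
    (x : EuclideanSpace ℝ (Fin n)) : ℝ :=
  ∑ i : Fin N, L i * ‖blockProj b i x‖ ^ 2

/-- The weighted norm `‖x‖₁ = (∑ᵢ Lᵢ ‖Uᵢᵀ x‖²)^{1/2}`. -/
def wnorm {n N : ℕ} (b : Fin n → Fin N) (L : Fin N → ℝ)
    (x : EuclideanSpace ℝ (Fin n)) : ℝ :=
  Real.sqrt (wnormSq b L x)

/-- The coordinate gradient step `Tᵢ x = x − (1/Lᵢ) Uᵢ Uᵢᵀ ∇F_γ(x)`. -/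
def coordStep {n N : ℕ} (b : Fin n → Fin N) (L : Fin N → ℝ)
    (Fγ : EuclideanSpace ℝ (Fin n) → ℝ) (i : Fin N) (x : EuclideanSpace ℝ (Fin n)) :
    EuclideanSpace ℝ (Fin n) :=
  x - (1 / L i) • blockProj b i (gradient Fγ x)

/-- Deterministic trajectory of a coordinate method: `traj step x₀ k ω` is the iterate
`x_k(ω)` obtained from `x₀` by applying `step ω₀, step ω₁, …, step ω_{k−1}` in order. -/
def traj {n N : ℕ} (step : Fin N → EuclideanSpace ℝ (Fin n) → EuclideanSpace ℝ (Fin n))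
    (x₀ : EuclideanSpace ℝ (Fin n)) : ∀ k : ℕ, (Fin k → Fin N) → EuclideanSpace ℝ (Fin n)
  | 0, _ => x₀
  | (k + 1), ω => step (ω (Fin.last k)) (traj step x₀ k (fun j => ω j.castSucc))

namespace CDProof

variable {n N : ℕ} {b : Fin n → Fin N}

lemma blockProj_apply (i : Fin N) (x : EuclideanSpace ℝ (Fin n)) (j : Fin n) :
    blockProj b i x j = if b j = i then x j else 0 := rfl

lemma blockProj_add (i : Fin N) (x y : EuclideanSpace ℝ (Fin n)) :
    blockProj b i (x + y) = blockProj b i x + blockProj b i y := by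
  ext j; simp only [blockProj_apply, PiLp.add_apply]; split <;> simp

lemma blockProj_smul (i : Fin N) (c : ℝ) (x : EuclideanSpace ℝ (Fin n)) :
    blockProj b i (c • x) = c • blockProj b i x := by
  ext j; simp only [blockProj_apply, PiLp.smul_apply, smul_eq_mul]; split <;> simp

lemma blockProj_sub (i : Fin N) (x y : EuclideanSpace ℝ (Fin n)) :
    blockProj b i (x - y) = blockProj b i x - blockProj b i y := by
  ext j; simp only [blockProj_apply, PiLp.sub_apply]; split <;> simp

lemma inner_blockProj (i : Fin N) (x y : EuclideanSpace ℝ (Fin n)) :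
    ⟪blockProj b i x, y⟫ = ∑ j : Fin n, (if b j = i then x j * y j else 0) := by
  rw [PiLp.inner_apply]
  refine Finset.sum_congr rfl fun j _ => ?_
  simp only [blockProj_apply, RCLike.inner_apply, conj_trivial]
  split <;> simp [mul_comm]

lemma inner_blockProj_right (i : Fin N) (x y : EuclideanSpace ℝ (Fin n)) :
    ⟪x, blockProj b i y⟫ = ⟪blockProj b i x, y⟫ := by
  rw [real_inner_comm, inner_blockProj, inner_blockProj]
  exact Finset.sum_congr rfl fun j _ => by split <;> ring

lemma blockProj_blockProj_self (i : Fin N) (x : EuclideanSpace ℝ (Fin n)) :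
    blockProj b i (blockProj b i x) = blockProj b i x := by
  ext j; simp only [blockProj_apply]; split <;> simp_all

lemma blockProj_blockProj_ne {i j : Fin N} (hij : j ≠ i) (x : EuclideanSpace ℝ (Fin n)) :
    blockProj b j (blockProj b i x) = 0 := by
  ext m
  simp only [blockProj_apply, PiLp.zero_apply]
  split
  · rename_i h1
    rw [if_neg (h1 ▸ hij)]
  · rfl

lemma sum_inner_blockProj (x y : EuclideanSpace ℝ (Fin n)) :
    ∑ i : Fin N, ⟪x, blockProj b i y⟫ = ⟪x, y⟫ := by
  rw [PiLp.inner_apply]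
  simp only [inner_blockProj_right, inner_blockProj]
  rw [Finset.sum_comm]
  refine Finset.sum_congr rfl fun j _ => ?_
  rw [Finset.sum_ite_eq (Finset.univ) (b j) (fun _ => x j * y j)]
  simp [RCLike.inner_apply, mul_comm]

lemma wnormSq_nonneg {L : Fin N → ℝ} (hL : ∀ i, 0 < L i) (x : EuclideanSpace ℝ (Fin n)) :
    0 ≤ wnormSq b L x :=
  Finset.sum_nonneg fun i _ => mul_nonneg (hL i).le (sq_nonneg _)

/-- Key expansion: adding a multiple of a block vector changes only one term. -/
lemma wnormSq_add_smul_blockProj (L : Fin N → ℝ) (d g : EuclideanSpace ℝ (Fin n))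
    (i : Fin N) (c : ℝ) :
    wnormSq b L (d + c • blockProj b i g)
      = wnormSq b L d + 2 * c * L i * ⟪d, blockProj b i g⟫
        + c ^ 2 * L i * ‖blockProj b i g‖ ^ 2 := by
  unfold wnormSq
  have key : ∀ j : Fin N,
      L j * ‖blockProj b j (d + c • blockProj b i g)‖ ^ 2
        = L j * ‖blockProj b j d‖ ^ 2
          + (if j = i then 2 * c * L i * ⟪d, blockProj b i g⟫
              + c ^ 2 * L i * ‖blockProj b i g‖ ^ 2 else 0) := by
    intro j
    rw [blockProj_add, blockProj_smul]
    by_cases hj : j = i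
    · subst hj
      rw [blockProj_blockProj_self, if_pos rfl, norm_add_sq_real]
      have h1 : ⟪blockProj b j d, c • blockProj b j g⟫ = c * ⟪d, blockProj b j g⟫ := by
        rw [real_inner_smul_right, ← inner_blockProj_right, blockProj_blockProj_self,
          inner_blockProj_right]
      rw [h1, norm_smul]
      simp only [Real.norm_eq_abs, mul_pow, sq_abs]
      ring
    · rw [blockProj_blockProj_ne hj, smul_zero, add_zero, if_neg hj, add_zero]
  rw [Finset.sum_congr rfl fun j _ => key j, Finset.sum_add_distrib,
    Finset.sum_ite_eq' Finset.univ i, if_pos (Finset.mem_univ i), ← add_assoc]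

section core
variable {E : Type*} [NormedAddCommGroup E] [InnerProductSpace ℝ E] [CompleteSpace E]

/-- derivative of `t ↦ F (x + t • h)` -/
lemma hasDerivAt_line (F : E → ℝ) (hdiff : Differentiable ℝ F) (x h : E) (t : ℝ) :
    HasDerivAt (fun s : ℝ => F (x + s • h)) ⟪gradient F (x + t • h), h⟫ t := by
  have hg : HasGradientAt F (gradient F (x + t • h)) (x + t • h) :=
    (hdiff _).hasGradientAt
  have hfd := (hasGradientAt_iff_hasFDerivAt.mp hg)
  have hline : HasDerivAt (fun s : ℝ => x + s • h) h t := by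
    simpa using (HasDerivAt.smul_const (hasDerivAt_id t) h).const_add x
  have := hfd.comp_hasDerivAt t hline
  exact this

/-- Convexity inequality: `F y ≥ F x + ⟪∇F x, y - x⟫`. -/
lemma convex_grad_ineq (F : E → ℝ) (hconv : ConvexOn ℝ Set.univ F)
    (hdiff : Differentiable ℝ F) (x y : E) :
    F x + ⟪gradient F x, y - x⟫ ≤ F y := by
  set φ : ℝ → ℝ := fun s => F (x + s • (y - x)) with hφ
  have hφconv : ConvexOn ℝ Set.univ φ := by
    have := hconv.comp_affineMap (AffineMap.lineMap x y : ℝ →ᵃ[ℝ] E)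
    simp only [Set.preimage_univ] at this
    suffices hfun : φ = F ∘ ⇑(AffineMap.lineMap x y : ℝ →ᵃ[ℝ] E) by rw [hfun]; exact this
    funext s
    simp only [Function.comp_apply, AffineMap.lineMap_apply_module, φ]
    congr 1
    module
  have hd : HasDerivAt φ ⟪gradient F x, y - x⟫ 0 := by
    have := hasDerivAt_line F hdiff x (y - x) 0
    simpa using this
  have hslope := hφconv.le_slope_of_hasDerivWithinAt (Set.mem_univ (0:ℝ))
    (Set.mem_univ (1:ℝ)) one_pos hd.hasDerivWithinAt
  rw [slope_def_field] at hslope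
  have h0 : φ 0 = F x := by simp [φ]
  have h1 : φ 1 = F y := by simp [φ]
  simp [h0, h1] at hslope
  have e : ⟪gradient F x, y - x⟫ = fderiv ℝ F x y - fderiv ℝ F x x := by
    rw [inner_sub_right, gradient, InnerProductSpace.toDual_symm_apply,
      InnerProductSpace.toDual_symm_apply]
  linarith

/-- Quadratic upper bound along a direction with Lipschitz directional gradient. -/
lemma descent_general (F : E → ℝ) (hdiff : Differentiable ℝ F) (x h : E) (Li : ℝ)
    (hlip : ∀ t : ℝ, 0 ≤ t → t ≤ 1 →
      ⟪gradient F (x + t • h) - gradient F x, h⟫ ≤ Li * t * ‖h‖ ^ 2) :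
    F (x + h) ≤ F x + ⟪gradient F x, h⟫ + Li / 2 * ‖h‖ ^ 2 := by
  set g := gradient F x with hg
  set ψ : ℝ → ℝ := fun t => F (x + t • h) - t * ⟪g, h⟫ - Li / 2 * t ^ 2 * ‖h‖ ^ 2 with hψ
  have hψd : ∀ t : ℝ, HasDerivAt ψ
      (⟪gradient F (x + t • h), h⟫ - ⟪g, h⟫ - Li * t * ‖h‖ ^ 2) t := by
    intro t
    have h1 := hasDerivAt_line F hdiff x h t
    have h2 : HasDerivAt (fun t : ℝ => t * ⟪g, h⟫) ⟪g, h⟫ t := by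
      simpa using (hasDerivAt_id t).mul_const ⟪g, h⟫
    have h3 : HasDerivAt (fun t : ℝ => Li / 2 * t ^ 2 * ‖h‖ ^ 2)
        (Li * t * ‖h‖ ^ 2) t := by
      have : HasDerivAt (fun t : ℝ => t ^ 2) (2 * t) t := by
        simpa using hasDerivAt_pow 2 t
      have := (this.const_mul (Li / 2)).mul_const (‖h‖ ^ 2)
      rw [show Li * t * ‖h‖ ^ 2 = Li / 2 * (2 * t) * ‖h‖ ^ 2 by ring]
      exact this
    exact (h1.sub h2).sub h3
  have hmono : AntitoneOn ψ (Set.Icc 0 1) := by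
    apply antitoneOn_of_deriv_nonpos (convex_Icc 0 1)
    · exact Continuous.continuousOn (by
        exact (Differentiable.continuous (fun t => (hψd t).differentiableAt)))
    · intro t ht
      exact (hψd t).differentiableAt.differentiableWithinAt
    · intro t ht
      rw [interior_Icc] at ht
      rw [(hψd t).deriv]
      have := hlip t ht.1.le ht.2.le
      have expand : ⟪gradient F (x + t • h), h⟫ - ⟪g, h⟫
          = ⟪gradient F (x + t • h) - g, h⟫ := by
        rw [inner_sub_left]
      linarith [expand ▸ this]
  have := hmono (Set.left_mem_Icc.mpr zero_le_one) (Set.right_mem_Icc.mpr zero_le_one)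
    zero_le_one
  simp only [ψ] at this
  simp at this
  linarith [this]
end core

end CDProof
namespace CDProof
variable {n N : ℕ} {b : Fin n → Fin N}

lemma blockProj_fixed (i : Fin N) (c : ℝ) (g : EuclideanSpace ℝ (Fin n)) :
    blockProj b i (c • blockProj b i g) = c • blockProj b i g := by
  rw [blockProj_smul, blockProj_blockProj_self]

lemma inner_blockProj_blockProj (i : Fin N) (x y : EuclideanSpace ℝ (Fin n)) :
    ⟪blockProj b i x, blockProj b i y⟫ = ⟪blockProj b i x, y⟫ := by
  rw [inner_blockProj, inner_blockProj]
  refine Finset.sum_congr rfl fun j _ => ?_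
  by_cases hj : b j = i <;> simp [blockProj_apply, hj]

/-- Block descent lemma. -/
lemma coordStep_descent (L : Fin N → ℝ) (hL : ∀ i, 0 < L i)
    (Fγ : EuclideanSpace ℝ (Fin n) → ℝ) (hdiff : Differentiable ℝ Fγ)
    (hlip : ∀ (x h : EuclideanSpace ℝ (Fin n)) (i : Fin N), blockProj b i h = h →
      ‖blockProj b i (gradient Fγ (x + h) - gradient Fγ x)‖ ≤ L i * ‖h‖)
    (i : Fin N) (x : EuclideanSpace ℝ (Fin n)) :
    Fγ (coordStep b L Fγ i x)
      ≤ Fγ x - 1 / (2 * L i) * ‖blockProj b i (gradient Fγ x)‖ ^ 2 := by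
  set g := gradient Fγ x with hg
  set h : EuclideanSpace ℝ (Fin n) := (-(1 / L i)) • blockProj b i g with hh
  have hfix : blockProj b i h = h := blockProj_fixed i _ g
  have hstep : coordStep b L Fγ i x = x + h := by
    rw [coordStep, hh, neg_smul, ← sub_eq_add_neg, hg]
  have hdesc := descent_general Fγ hdiff x h (L i) ?_
  · rw [hstep]
    have hPg : ⟪g, blockProj b i g⟫ = ‖blockProj b i g‖ ^ 2 := by
      rw [inner_blockProj_right, ← inner_blockProj_blockProj, real_inner_self_eq_norm_sq]
    have hinner : ⟪g, h⟫ = -(1 / L i) * ‖blockProj b i g‖ ^ 2 := by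
      rw [hh, real_inner_smul_right, hPg]
    have hnorm : ‖h‖ ^ 2 = (1 / L i) ^ 2 * ‖blockProj b i g‖ ^ 2 := by
      rw [hh, norm_smul]
      simp only [Real.norm_eq_abs, mul_pow, sq_abs]
      ring_nf
    rw [hinner, hnorm] at hdesc
    have hLi := hL i
    calc Fγ (x + h) ≤ Fγ x + -(1 / L i) * ‖blockProj b i g‖ ^ 2
        + L i / 2 * ((1 / L i) ^ 2 * ‖blockProj b i g‖ ^ 2) := hdesc
      _ = Fγ x - 1 / (2 * L i) * ‖blockProj b i g‖ ^ 2 := by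
        field_simp
        ring
  · intro t ht0 _
    have hth : blockProj b i (t • h) = t • h := by rw [blockProj_smul, hfix]
    have hlb := hlip x (t • h) i hth
    have e1 : ⟪gradient Fγ (x + t • h) - g, h⟫
        = ⟪blockProj b i (gradient Fγ (x + t • h) - g), h⟫ := by
      conv_lhs => rw [← hfix]
      rw [inner_blockProj_right, hfix]
    rw [norm_smul, Real.norm_eq_abs, abs_of_nonneg ht0] at hlb
    rw [e1]
    calc ⟪blockProj b i (gradient Fγ (x + t • h) - g), h⟫
        ≤ ‖blockProj b i (gradient Fγ (x + t • h) - g)‖ * ‖h‖ := real_inner_le_norm _ _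
      _ ≤ (L i * (t * ‖h‖)) * ‖h‖ :=
          mul_le_mul_of_nonneg_right hlb (norm_nonneg _)
      _ = L i * t * ‖h‖ ^ 2 := by ring
end CDProof
namespace CDProof
variable {n N : ℕ} {b : Fin n → Fin N}

/-- One-step expectation bound. -/
lemma step_bound (L : Fin N → ℝ) (hL : ∀ i, 0 < L i)
    (Fγ : EuclideanSpace ℝ (Fin n) → ℝ)
    (hconv : ConvexOn ℝ Set.univ Fγ) (hdiff : Differentiable ℝ Fγ)
    (hlip : ∀ (x h : EuclideanSpace ℝ (Fin n)) (i : Fin N), blockProj b i h = h →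
      ‖blockProj b i (gradient Fγ (x + h) - gradient Fγ x)‖ ≤ L i * ‖h‖)
    (Xs : Set (EuclideanSpace ℝ (Fin n)))
    (Fs : ℝ) (hFs : ∀ z ∈ Xs, Fγ z ≤ Fs)
    (proj : EuclideanSpace ℝ (Fin n) → EuclideanSpace ℝ (Fin n))
    (hprojmem : ∀ z, proj z ∈ Xs)
    (hproj : ∀ z, ∀ w ∈ Xs, wnorm b L (z - proj z) ≤ wnorm b L (z - w))
    (κbar : ℝ) (hκ : 0 < κbar)
    (hgrowth : ∀ x, κbar / 2 * wnormSq b L (x - proj x) ≤ Fγ x - Fs)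
    (x : EuclideanSpace ℝ (Fin n)) :
    ∑ i : Fin N, (1 / 2 * wnormSq b L (coordStep b L Fγ i x - proj (coordStep b L Fγ i x))
        + Fγ (coordStep b L Fγ i x) - Fs)
      ≤ ((N : ℝ) - κbar / (1 + κbar))
          * (1 / 2 * wnormSq b L (x - proj x) + Fγ x - Fs) := by
  set g := gradient Fγ x with hg
  set xb := proj x with hxb
  set d := x - xb with hd
  set S := wnormSq b L d with hS
  -- squared projection optimality
  have hproj2 : ∀ z : EuclideanSpace ℝ (Fin n), ∀ w ∈ Xs,
      wnormSq b L (z - proj z) ≤ wnormSq b L (z - w) := by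
    intro z w hw
    have h1 := hproj z w hw
    have h2 : wnormSq b L (z - proj z) = (wnorm b L (z - proj z)) ^ 2 := by
      rw [wnorm, Real.sq_sqrt (wnormSq_nonneg hL _)]
    have h3 : wnormSq b L (z - w) = (wnorm b L (z - w)) ^ 2 := by
      rw [wnorm, Real.sq_sqrt (wnormSq_nonneg hL _)]
    rw [h2, h3]
    exact pow_le_pow_left₀ (Real.sqrt_nonneg _) h1 2
  have key : ∀ i : Fin N,
      1 / 2 * wnormSq b L (coordStep b L Fγ i x - proj (coordStep b L Fγ i x))
          + Fγ (coordStep b L Fγ i x) - Fs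
        ≤ 1 / 2 * S + Fγ x - Fs - ⟪d, blockProj b i g⟫ := by
    intro i
    have hLi := hL i
    have ha := hproj2 (coordStep b L Fγ i x) xb (hprojmem x)
    have hdecomp : coordStep b L Fγ i x - xb = d + (-(1 / L i)) • blockProj b i g := by
      rw [coordStep, hd, ← hg]
      module
    have hexp := wnormSq_add_smul_blockProj (b := b) L d g i (-(1 / L i))
    rw [← hdecomp, ← hS] at hexp
    have hdesc := coordStep_descent L hL Fγ hdiff hlip i x
    rw [← hg] at hdesc
    set A := ⟪d, blockProj b i g⟫ with hA
    set B := ‖blockProj b i g‖ ^ 2 with hBdef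
    have e2 : 2 * (-(1 / L i)) * L i * A = -2 * A := by field_simp
    have e3 : (-(1 / L i)) ^ 2 * L i * B = 1 / L i * B := by
      field_simp
    rw [e2, e3] at hexp
    have e5 : 1 / 2 * (1 / L i * B) = 1 / (2 * L i) * B := by
      field_simp
    have hB : 0 ≤ B := hBdef ▸ sq_nonneg _
    linarith [ha, hexp, hdesc, e5]
  have hsum := Finset.sum_le_sum (fun i (_ : i ∈ Finset.univ) => key i)
  have hsum2 : ∑ i : Fin N, (1 / 2 * S + Fγ x - Fs - ⟪d, blockProj b i g⟫)
      = (N : ℝ) * (1 / 2 * S + Fγ x - Fs) - ⟪d, g⟫ := by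
    rw [Finset.sum_sub_distrib, Finset.sum_const, Finset.card_univ, Fintype.card_fin,
      sum_inner_blockProj]
    simp [nsmul_eq_mul]
  rw [hsum2] at hsum
  -- convexity: ⟪d, g⟫ ≥ Fγ x - Fs
  have hcvx : Fγ x - Fs ≤ ⟪d, g⟫ := by
    have h1 := convex_grad_ineq Fγ hconv hdiff x xb
    have h2 : Fγ xb ≤ Fs := hFs xb (hprojmem x)
    have h3 : ⟪g, xb - x⟫ = -⟪d, g⟫ := by
      rw [real_inner_comm]
      have : xb - x = -d := by rw [hd]; abel
      rw [this, inner_neg_left]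
    rw [← hg] at h1
    rw [h3] at h1
    linarith
  -- growth: κ/(1+κ) Φ ≤ Fγ x - Fs
  have h1κ : (0:ℝ) < 1 + κbar := by linarith
  have hgr := hgrowth x
  rw [← hxb, ← hd, ← hS] at hgr
  have hGΦ : κbar / (1 + κbar) * (1 / 2 * S + Fγ x - Fs) ≤ Fγ x - Fs := by
    rw [div_mul_eq_mul_div, div_le_iff₀ h1κ]
    have expand : κbar * (1 / 2 * S + Fγ x - Fs)
        = κbar / 2 * S + κbar * (Fγ x - Fs) := by ring
    have e : (Fγ x - Fs) * (1 + κbar) = (Fγ x - Fs) + κbar * (Fγ x - Fs) := by ring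
    linarith [hgr]
  calc ∑ i : Fin N, (1 / 2 * wnormSq b L (coordStep b L Fγ i x
          - proj (coordStep b L Fγ i x)) + Fγ (coordStep b L Fγ i x) - Fs)
      ≤ (N : ℝ) * (1 / 2 * S + Fγ x - Fs) - ⟪d, g⟫ := hsum
    _ ≤ (N : ℝ) * (1 / 2 * S + Fγ x - Fs)
        - κbar / (1 + κbar) * (1 / 2 * S + Fγ x - Fs) := by linarith
    _ = ((N : ℝ) - κbar / (1 + κbar)) * (1 / 2 * S + Fγ x - Fs) := by ring
end CDProof

/-- The snoc equivalence used to peel off the last step of an index word. -/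
def snocEquiv (k N : ℕ) : ((Fin k → Fin N) × Fin N) ≃ (Fin (k + 1) → Fin N) where
  toFun p := Fin.snoc p.1 p.2
  invFun ω := (fun j => ω j.castSucc, ω (Fin.last k))
  left_inv p := by
    ext j
    · simp [Fin.snoc_castSucc]
    · simp [Fin.snoc_last]
  right_inv ω := by
    funext j
    exact congrFun (Fin.snoc_init_self ω) j

theorem coordinate_descent_linear_rate_two_growth (n N : ℕ) (hN : 0 < N)
    (b : Fin n → Fin N) (L : Fin N → ℝ) (hL : ∀ i, 0 < L i)
    (Fγ : EuclideanSpace ℝ (Fin n) → ℝ)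
    (hconv : ConvexOn ℝ Set.univ Fγ) (hdiff : Differentiable ℝ Fγ)
    (hlip : ∀ (x h : EuclideanSpace ℝ (Fin n)) (i : Fin N), blockProj b i h = h →
      ‖blockProj b i (gradient Fγ (x + h) - gradient Fγ x)‖ ≤ L i * ‖h‖)
    (Xs : Set (EuclideanSpace ℝ (Fin n)))
    (hXsne : Xs.Nonempty) (hXscl : IsClosed Xs) (hXsconv : Convex ℝ Xs)
    (Fs : ℝ) (hFs : ∀ z ∈ Xs, Fγ z ≤ Fs)
    (proj : EuclideanSpace ℝ (Fin n) → EuclideanSpace ℝ (Fin n))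
    (hprojmem : ∀ z, proj z ∈ Xs)
    (hproj : ∀ z, ∀ w ∈ Xs, wnorm b L (z - proj z) ≤ wnorm b L (z - w))
    (κbar : ℝ) (hκ : 0 < κbar)
    (hgrowth : ∀ x, κbar / 2 * wnormSq b L (x - proj x) ≤ Fγ x - Fs)
    (x₀ : EuclideanSpace ℝ (Fin n)) :
    ∀ k : ℕ,
      ((N : ℝ) ^ k)⁻¹ * ∑ ω : Fin k → Fin N,
          ((1 / 2) * wnormSq b L (traj (coordStep b L Fγ) x₀ k ω
              - proj (traj (coordStep b L Fγ) x₀ k ω))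
            + Fγ (traj (coordStep b L Fγ) x₀ k ω) - Fs)
        ≤ (1 - κbar / ((N : ℝ) * (1 + κbar))) ^ k
            * ((1 / 2) * wnormSq b L (x₀ - proj x₀) + Fγ x₀ - Fs) := by
  classical
  set Φ : EuclideanSpace ℝ (Fin n) → ℝ :=
    fun z => (1 / 2) * wnormSq b L (z - proj z) + Fγ z - Fs with hΦ
  have hNpos : (0:ℝ) < (N:ℝ) := by exact_mod_cast hN
  have h1κ : (0:ℝ) < 1 + κbar := by linarith
  set ρ : ℝ := 1 - κbar / ((N : ℝ) * (1 + κbar)) with hρ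
  have hρnn : 0 ≤ ρ := by
    rw [hρ, sub_nonneg]
    rw [div_le_one (by positivity)]
    have hN1 : (1:ℝ) ≤ (N:ℝ) := by exact_mod_cast hN
    nlinarith
  have hNρ : (N : ℝ) * ρ = (N : ℝ) - κbar / (1 + κbar) := by
    rw [hρ]
    field_simp
  intro k
  induction k with
  | zero =>
    simp only [pow_zero, inv_one, one_mul]
    haveI : Subsingleton (Fin 0 → Fin N) := ⟨fun a c => funext fun j => j.elim0⟩
    rw [Fintype.sum_subsingleton _ (fun j : Fin 0 => j.elim0)]
    rfl
  | succ k ih =>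
    have hsplit : ∑ ω : Fin (k+1) → Fin N, Φ (traj (coordStep b L Fγ) x₀ (k+1) ω)
        = ∑ σ : Fin k → Fin N, ∑ i : Fin N,
            Φ (coordStep b L Fγ i (traj (coordStep b L Fγ) x₀ k σ)) := by
      rw [← Equiv.sum_comp (snocEquiv k N)
        (fun ω => Φ (traj (coordStep b L Fγ) x₀ (k+1) ω)), Fintype.sum_prod_type]
      refine Finset.sum_congr rfl fun σ _ => Finset.sum_congr rfl fun i _ => ?_
      congr 1
      show coordStep b L Fγ ((Fin.snoc σ i : Fin (k+1) → Fin N) (Fin.last k))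
          (traj (coordStep b L Fγ) x₀ k (fun j => (Fin.snoc σ i : Fin (k+1) → Fin N) j.castSucc))
        = coordStep b L Fγ i (traj (coordStep b L Fγ) x₀ k σ)
      rw [Fin.snoc_last]
      congr 1
      congr 1
      funext j
      simp
    have hstep : ∀ σ : Fin k → Fin N,
        ∑ i : Fin N, Φ (coordStep b L Fγ i (traj (coordStep b L Fγ) x₀ k σ))
          ≤ ((N : ℝ) - κbar / (1 + κbar)) * Φ (traj (coordStep b L Fγ) x₀ k σ) := by
      intro σ
      exact CDProof.step_bound L hL Fγ hconv hdiff hlip Xs Fs hFs proj hprojmem hproj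
        κbar hκ hgrowth _
    calc ((N : ℝ) ^ (k+1))⁻¹ * ∑ ω : Fin (k+1) → Fin N,
            Φ (traj (coordStep b L Fγ) x₀ (k+1) ω)
        ≤ ((N : ℝ) ^ (k+1))⁻¹ * ∑ σ : Fin k → Fin N,
            ((N : ℝ) - κbar / (1 + κbar)) * Φ (traj (coordStep b L Fγ) x₀ k σ) := by
          apply mul_le_mul_of_nonneg_left _ (by positivity)
          rw [hsplit]
          exact Finset.sum_le_sum fun σ _ => hstep σ
      _ = ρ * (((N : ℝ) ^ k)⁻¹ * ∑ σ : Fin k → Fin N,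
            Φ (traj (coordStep b L Fγ) x₀ k σ)) := by
          rw [← Finset.mul_sum, ← hNρ]
          rw [pow_succ]
          field_simp
      _ ≤ ρ * (ρ ^ k * Φ x₀) := by
          apply mul_le_mul_of_nonneg_left _ hρnn
          exact ih
      _ = ρ ^ (k+1) * Φ x₀ := by ring
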